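/- Let ξ : ℂ → ℂ, A and B complex numbers, m₀ a natural number, and (γₖ)_{k∈I} a countable family of nonzero complex numbers with (1/|γₖ|²)_{k∈I} summable, such that for every complex z the product representation ξ(1/2 − iz) = e^{A + Bz} z^{m₀} Πₖ (1 − z/γₖ) e^{z/γₖ} holds (the family ((1 − z/γₖ) e^{z/γₖ})_{k∈I} being multipliable for every z), and suppose ξ is differentiable at 1/2 − iz₀ for a complex number z₀ that is not equal to 0 or to any γₖ. Then ξ(1/2 − iz₀) ≠ 0 and (ξ'/ξ)(1/2 − iz₀) = iB + i m₀/z₀ + i Σₖ (1/(z₀ − γₖ) + 1/γₖ), the series converging absolutely. -/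

import Mathlib

open MeasureTheory

open Complex Filter Topology

private lemma one_add_ne_zero_of_small {u : ℂ} (hu : ‖u‖ ≤ 1/2) : 1 + u ≠ 0 := by
  intro h
  have hu1 : u = -1 := by linear_combination h
  rw [hu1] at hu
  norm_num at hu

private lemma log_quad {u : ℂ} (hu : ‖u‖ ≤ 1/2) : ‖Complex.log (1 + u) - u‖ ≤ ‖u‖^2 := by
  have h1 := Complex.norm_log_one_add_sub_self_le (show ‖u‖ < 1 by linarith)
  have h2 : (1 - ‖u‖)⁻¹ ≤ 2 := by
    rw [show (2:ℝ) = (1/2 : ℝ)⁻¹ by norm_num]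
    gcongr
    linarith
  calc ‖Complex.log (1 + u) - u‖ ≤ ‖u‖^2 * (1 - ‖u‖)⁻¹ / 2 := h1
    _ ≤ ‖u‖^2 * 2 / 2 := by gcongr
    _ = ‖u‖^2 := by ring

private lemma hadamard_core {I : Type*} [Countable I] (γ : I → ℂ) (hγ : ∀ k, γ k ≠ 0)
    (hsum : Summable fun k => 1 / ‖γ k‖ ^ 2)
    (hmul : ∀ z : ℂ, Multipliable fun k => (1 - z / γ k) * Complex.exp (z / γ k))
    (z₀ : ℂ) (hz₀' : ∀ k, z₀ ≠ γ k) :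
    (∏' k, (1 - z₀ / γ k) * Complex.exp (z₀ / γ k)) ≠ 0 ∧
    (Summable fun k => ‖1 / (z₀ - γ k) + 1 / γ k‖) ∧
    HasDerivAt (fun z => ∏' k, (1 - z / γ k) * Complex.exp (z / γ k))
      ((∏' k, (1 - z₀ / γ k) * Complex.exp (z₀ / γ k)) * ∑' k, (1 / (z₀ - γ k) + 1 / γ k)) z₀ := by
  classical
  have hγ' : ∀ k, (0:ℝ) < ‖γ k‖ := fun k => norm_pos_iff.mpr (hγ k)
  have hzγ : ∀ k, z₀ - γ k ≠ 0 := fun k => sub_ne_zero.mpr (hz₀' k)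
  have hzγ' : ∀ k, (0:ℝ) < ‖z₀ - γ k‖ := fun k => norm_pos_iff.mpr (hzγ k)
  -- finiteness of small gammas
  have hfin : ∀ R : ℝ, {k | ‖γ k‖ ≤ R}.Finite := by
    intro R
    have h0 : Tendsto (fun k => 1 / ‖γ k‖ ^ 2) cofinite (𝓝 0) := hsum.tendsto_cofinite_zero
    have h1 : ∀ᶠ k in cofinite, 1 / ‖γ k‖ ^ 2 < 1 / (max R 1) ^ 2 :=
      h0.eventually (gt_mem_nhds (by positivity))
    have h2 : ∀ᶠ k in cofinite, ¬ (‖γ k‖ ≤ R) := by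
      filter_upwards [h1] with k hk hle
      have hR1 : (0:ℝ) < max R 1 := lt_of_lt_of_le one_pos (le_max_right R 1)
      have h3 : (max R 1)^2 < ‖γ k‖^2 := by
        by_contra hcon
        push_neg at hcon
        have := one_div_le_one_div_of_le (pow_pos (hγ' k) 2) hcon
        linarith
      nlinarith [le_max_left R 1, norm_nonneg (γ k)]
    exact (Filter.eventually_cofinite.mp h2).subset (fun k hk => not_not_intro hk)
  have hev : ∀ᶠ k in cofinite, 2*‖z₀‖ + 2 < ‖γ k‖ :=
    Filter.eventually_cofinite.mpr ((hfin (2*‖z₀‖+2)).subset (fun k hk => not_lt.mp hk))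
  -- summability of the series
  have hck : ∀ k, 1 / (z₀ - γ k) + 1 / γ k = z₀ / ((z₀ - γ k) * γ k) := by
    intro k; field_simp [hzγ k, hγ k]; ring
  have hsc : Summable fun k => ‖1 / (z₀ - γ k) + 1 / γ k‖ := by
    apply Summable.of_norm_bounded_eventually (g := fun k => (2*‖z₀‖) * (1/‖γ k‖^2)) (hsum.mul_left _)
    filter_upwards [hev] with k hk
    have h1 : ‖γ k‖ - ‖z₀‖ ≤ ‖z₀ - γ k‖ := by
      rw [norm_sub_rev]; exact (norm_sub_norm_le (γ k) z₀)
    rw [norm_norm, hck k, norm_div, norm_mul, mul_one_div,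
      div_le_div_iff₀ (mul_pos (hzγ' k) (hγ' k)) (pow_pos (hγ' k) 2)]
    have key : 0 ≤ ‖z₀‖ * ‖γ k‖ * (2*‖z₀ - γ k‖ - ‖γ k‖) := by
      apply mul_nonneg (mul_nonneg (norm_nonneg _) (norm_nonneg _))
      linarith [norm_nonneg z₀]
    nlinarith [norm_nonneg z₀, norm_nonneg (γ k)]
  have hsa2 : Summable fun k => ‖1 / (z₀ - γ k)‖^2 := by
    apply Summable.of_norm_bounded_eventually (g := fun k => 4 * (1/‖γ k‖^2)) (hsum.mul_left _)
    filter_upwards [hev] with k hk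
    have h1 : ‖γ k‖ - ‖z₀‖ ≤ ‖z₀ - γ k‖ := by
      rw [norm_sub_rev]; exact (norm_sub_norm_le (γ k) z₀)
    rw [Real.norm_of_nonneg (by positivity), norm_div, norm_one, div_pow, one_pow, mul_one_div,
      div_le_div_iff₀ (pow_pos (hzγ' k) 2) (pow_pos (hγ' k) 2)]
    have key2 : 0 ≤ (2*‖z₀ - γ k‖ - ‖γ k‖)*(2*‖z₀ - γ k‖ + ‖γ k‖) :=
      mul_nonneg (by linarith [norm_nonneg z₀]) (by positivity)
    nlinarith [key2]
  have hone : ∀ k, (1:ℂ) - z₀/γ k ≠ 0 := by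
    intro k h
    exact hz₀' k ((div_eq_one_iff_eq (hγ k)).mp (by linear_combination -h))
  have hfac_ne : ∀ k, (1 - z₀/γ k) * Complex.exp (z₀/γ k) ≠ 0 :=
    fun k => mul_ne_zero (hone k) (Complex.exp_ne_zero _)
  refine ⟨?_, hsc, ?_⟩
  · -- nonvanishing of the product
    have hfin2 : {k | 1/2 < ‖z₀ / γ k‖}.Finite := by
      apply (hfin (2*‖z₀‖)).subset
      intro k hk
      rw [Set.mem_setOf_eq, norm_div, lt_div_iff₀ (hγ' k)] at hk
      simp only [Set.mem_setOf_eq]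
      linarith
    set s : Set I := {k | 1/2 < ‖z₀ / γ k‖} with hs
    have hq : Summable fun k : ↑sᶜ =>
        Complex.log (1 - z₀/γ k.1) + z₀/γ k.1 := by
      apply Summable.of_norm_bounded (g := fun k : ↑sᶜ => ‖z₀‖^2 * (1/‖γ k.1‖^2))
        ((hsum.mul_left (‖z₀‖^2)).subtype _)
      intro k
      have hk : ‖z₀ / γ k.1‖ ≤ 1/2 := by
        have h2 := k.2
        simp only [hs, Set.mem_compl_iff, Set.mem_setOf_eq] at h2
        exact not_lt.mp h2
      have e : Complex.log (1 - z₀/γ k.1) + z₀/γ k.1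
          = Complex.log (1 + -(z₀/γ k.1)) - -(z₀/γ k.1) := by
        rw [← sub_eq_add_neg, sub_neg_eq_add]
      rw [e]
      calc ‖Complex.log (1 + -(z₀/γ k.1)) - -(z₀/γ k.1)‖ ≤ ‖-(z₀/γ k.1)‖^2 :=
            log_quad (by rwa [norm_neg])
        _ = ‖z₀‖^2 * (1/‖γ k.1‖^2) := by rw [norm_neg, norm_div, div_pow]; ring
    have hHP : HasProd (fun k : ↑sᶜ => (1 - z₀/γ k.1) * Complex.exp (z₀/γ k.1))
        (Complex.exp (∑' k : ↑sᶜ, (Complex.log (1 - z₀/γ k.1) + z₀/γ k.1))) := by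
      have h1 := hq.hasSum.cexp
      have heq : (Complex.exp ∘ fun k : ↑sᶜ => Complex.log (1 - z₀/γ k.1) + z₀/γ k.1)
          = fun k : ↑sᶜ => (1 - z₀/γ k.1) * Complex.exp (z₀/γ k.1) := by
        funext k
        simp only [Function.comp_apply]
        rw [Complex.exp_add, Complex.exp_log (hone k.1)]
      rwa [heq] at h1
    haveI : Finite ↥s := hfin2
    have hmuls : Multipliable (fun k : s => (1 - z₀/γ k.1) * Complex.exp (z₀/γ k.1)) :=
      Multipliable.of_finite
    rw [← Multipliable.tprod_mul_tprod_compl (f := fun k => (1 - z₀/γ k) * Complex.exp (z₀/γ k))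
      hmuls hHP.multipliable]
    apply mul_ne_zero
    · haveI := hfin2.fintype
      rw [tprod_fintype]
      exact Finset.prod_ne_zero_iff.mpr fun k _ => hfac_ne k.1
    · rw [hHP.tprod_eq]; exact Complex.exp_ne_zero _
  · -- the derivative
    obtain ⟨M, hM1, hM⟩ : ∃ M : ℝ, 1 ≤ M ∧ ∀ k, ‖1/(z₀ - γ k)‖ ≤ M := by
      obtain ⟨M₀, hM₀⟩ := (((hfin (‖z₀‖ + 1))).image fun k => ‖1/(z₀ - γ k)‖).bddAbove
      refine ⟨max M₀ 1, le_max_right _ _, fun k => ?_⟩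
      by_cases hk : ‖γ k‖ ≤ ‖z₀‖ + 1
      · exact le_trans (hM₀ ⟨k, hk, rfl⟩) (le_max_left _ _)
      · have h2 : ‖γ k‖ - ‖z₀‖ ≤ ‖z₀ - γ k‖ := by
          rw [norm_sub_rev]; exact norm_sub_norm_le (γ k) z₀
        push_neg at hk
        have h3 : ‖1/(z₀ - γ k)‖ ≤ 1 := by
          rw [norm_div, norm_one, div_le_one (hzγ' k)]; linarith
        exact le_trans h3 (le_max_right _ _)
    have hM0 : (0:ℝ) < M := lt_of_lt_of_le one_pos hM1
    set a : I → ℂ := fun k => 1/(z₀ - γ k) with ha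
    set c : I → ℂ := fun k => 1/(z₀ - γ k) + 1/γ k with hc
    set S := ∑' k, c k with hS
    set T := ∑' k, ‖a k‖^2 with hT
    have hT0 : (0:ℝ) ≤ T := tsum_nonneg (fun k => sq_nonneg _)
    have hcs : Summable c := by rwa [summable_norm_iff] at hsc
    set f : ℂ → I → ℂ := fun h k => Complex.log (1 + h * a k) + h * (1/γ k) with hf
    set r : ℂ → I → ℂ := fun h k => Complex.log (1 + h * a k) - h * a k with hr
    have hfr : ∀ h k, f h k = r h k + h * c k := by
      intro h k; simp only [hf, hr, hc, ha]; ring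
    have hsmall : ∀ (h : ℂ), ‖h‖ * M ≤ 1/2 → ∀ k, ‖h * a k‖ ≤ 1/2 := by
      intro h hh k
      calc ‖h * a k‖ = ‖h‖ * ‖a k‖ := norm_mul _ _
        _ ≤ ‖h‖ * M := by gcongr; exact hM k
        _ ≤ 1/2 := hh
    have hrb : ∀ (h : ℂ), ‖h‖ * M ≤ 1/2 → ∀ k, ‖r h k‖ ≤ ‖h‖^2 * ‖a k‖^2 := by
      intro h hh k
      calc ‖r h k‖ ≤ ‖h * a k‖^2 := log_quad (hsmall h hh k)
        _ = ‖h‖^2 * ‖a k‖^2 := by rw [norm_mul, mul_pow]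
    have hsr : ∀ (h : ℂ), ‖h‖ * M ≤ 1/2 → Summable fun k => ‖r h k‖ :=
      fun h hh => Summable.of_nonneg_of_le (fun k => norm_nonneg _) (hrb h hh) (hsa2.mul_left _)
    have hsf : ∀ (h : ℂ), ‖h‖ * M ≤ 1/2 → Summable (f h) := by
      intro h hh
      rw [show f h = fun k => r h k + h * c k from funext (hfr h)]
      exact (summable_norm_iff.mp (hsr h hh)).add (hcs.mul_left h)
    have hLb : ∀ (h : ℂ), ‖h‖ * M ≤ 1/2 → ‖(∑' k, f h k) - h * S‖ ≤ ‖h‖^2 * T := by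
      intro h hh
      have e1 : (∑' k, f h k) = (∑' k, r h k) + h * S := by
        rw [show f h = fun k => r h k + h * c k from funext (hfr h),
          Summable.tsum_add (summable_norm_iff.mp (hsr h hh)) (hcs.mul_left h), tsum_mul_left]
      rw [e1, add_sub_cancel_right]
      calc ‖∑' k, r h k‖ ≤ ∑' k, ‖r h k‖ := norm_tsum_le_tsum_norm (hsr h hh)
        _ ≤ ∑' k, ‖h‖^2 * ‖a k‖^2 := Summable.tsum_le_tsum (hrb h hh) (hsr h hh) (hsa2.mul_left _)
        _ = ‖h‖^2 * T := tsum_mul_left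
    have hHP2 : ∀ (h : ℂ), ‖h‖ * M ≤ 1/2 →
        HasProd (fun k => (1 + h * a k) * Complex.exp (h * (1/γ k)))
          (Complex.exp (∑' k, f h k)) := by
      intro h hh
      have h1 := (hsf h hh).hasSum.cexp
      have heq : (Complex.exp ∘ f h) = fun k => (1 + h * a k) * Complex.exp (h * (1/γ k)) := by
        funext k
        simp only [Function.comp_apply, hf]
        rw [Complex.exp_add, Complex.exp_log (one_add_ne_zero_of_small (hsmall h hh k))]
      rwa [heq] at h1
    have hshift : ∀ (h : ℂ), ‖h‖ * M ≤ 1/2 →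
        (∏' k, (1 - (z₀ + h) / γ k) * Complex.exp ((z₀ + h) / γ k))
          = (∏' k, (1 - z₀ / γ k) * Complex.exp (z₀ / γ k)) * Complex.exp (∑' k, f h k) := by
      intro h hh
      have h1 : ∀ k, (1 - (z₀ + h)/γ k) * Complex.exp ((z₀ + h)/γ k)
          = ((1 - z₀/γ k) * Complex.exp (z₀/γ k)) * ((1 + h * a k) * Complex.exp (h * (1/γ k))) := by
        intro k
        have e1 : Complex.exp ((z₀ + h)/γ k)
            = Complex.exp (z₀/γ k) * Complex.exp (h * (1/γ k)) := by
          rw [← Complex.exp_add]; congr 1; rw [mul_one_div, ← add_div]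
        have e2 : (1 - (z₀ + h)/γ k) = (1 - z₀/γ k) * (1 + h * a k) := by
          simp only [ha]; field_simp [hzγ k, hγ k]; ring
        rw [e1, e2]; ring
      rw [tprod_congr h1, Multipliable.tprod_mul (hmul z₀) (hHP2 h hh).multipliable, (hHP2 h hh).tprod_eq]
    have hL0 : (∑' k, f (0:ℂ) k) = 0 := by simp [hf]
    have hDL : HasDerivAt (fun h => ∑' k, f h k) S 0 := by
      rw [hasDerivAt_iff_isLittleO]
      apply Asymptotics.isLittleO_iff.mpr
      intro ε hε
      rw [Metric.eventually_nhds_iff]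
      refine ⟨min ((2*M)⁻¹) (ε/(T+1)), lt_min (by positivity) (by positivity), fun h hdist => ?_⟩
      rw [dist_zero_right] at hdist
      have hh : ‖h‖ * M ≤ 1/2 := by
        have h2 : ‖h‖ < (2*M)⁻¹ := lt_of_lt_of_le hdist (min_le_left _ _)
        have h3 := mul_lt_mul_of_pos_right h2 hM0
        rw [show (2*M)⁻¹ * M = 1/2 by field_simp] at h3
        linarith
      have h4 : ‖h‖ * (T+1) ≤ ε := by
        rw [← le_div_iff₀ (by positivity)]
        exact le_of_lt (lt_of_lt_of_le hdist (min_le_right _ _))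
      simp only [hL0, sub_zero, smul_eq_mul]
      calc ‖(∑' k, f h k) - h * S‖ ≤ ‖h‖^2 * T := hLb h hh
        _ ≤ ε * ‖h‖ := by nlinarith [norm_nonneg h, hT0,
              mul_le_mul_of_nonneg_left h4 (norm_nonneg h), sq_nonneg ‖h‖]
    have hDE : HasDerivAt (fun h : ℂ =>
        (∏' k, (1 - z₀/γ k) * Complex.exp (z₀/γ k)) * Complex.exp (∑' k, f h k))
        ((∏' k, (1 - z₀/γ k) * Complex.exp (z₀/γ k)) * S) 0 := by
      have := (hDL.cexp).const_mul (∏' k, (1 - z₀/γ k) * Complex.exp (z₀/γ k))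
      simpa [hL0] using this
    have hinner : HasDerivAt (fun z : ℂ => z - z₀) 1 z₀ := (hasDerivAt_id z₀).sub_const z₀
    have hcomp := HasDerivAt.comp (h := fun z : ℂ => z - z₀) z₀ (show HasDerivAt (fun h : ℂ =>
        (∏' k, (1 - z₀/γ k) * Complex.exp (z₀/γ k)) * Complex.exp (∑' k, f h k))
        ((∏' k, (1 - z₀/γ k) * Complex.exp (z₀/γ k)) * S) (z₀ - z₀) by
        rw [sub_self]; exact hDE) hinner
    have hevq : (fun z => ∏' k, (1 - z/γ k) * Complex.exp (z/γ k)) =ᶠ[nhds z₀]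
        ((fun h : ℂ => (∏' k, (1 - z₀/γ k) * Complex.exp (z₀/γ k))
          * Complex.exp (∑' k, f h k)) ∘ fun z => z - z₀) := by
      rw [Filter.eventuallyEq_iff_exists_mem]
      refine ⟨Metric.ball z₀ (2*M)⁻¹, Metric.ball_mem_nhds _ (by positivity), fun z hz => ?_⟩
      rw [Metric.mem_ball, dist_eq_norm] at hz
      have hh : ‖z - z₀‖ * M ≤ 1/2 := by
        have h3 := mul_lt_mul_of_pos_right hz hM0
        rw [show (2*M)⁻¹ * M = 1/2 by field_simp] at h3
        linarith
      have := hshift (z - z₀) hh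
      rw [show z₀ + (z - z₀) = z from by ring] at this
      exact this
    have final := hcomp.congr_of_eventuallyEq hevq
    simpa using final

/-- If `ξ(1/2 − iz) = e^{A+Bz} z^{m₀} Πₖ (1 − z/γₖ) e^{z/γₖ}` for all `z`
(the products being multipliable), and `ξ` is differentiable at `1/2 − iz₀` for some
`z₀` not equal to `0` nor to any `γₖ`, then `ξ(1/2 − iz₀) ≠ 0` and
`(ξ'/ξ)(1/2 − iz₀) = iB + i m₀/z₀ + i Σₖ (1/(z₀ − γₖ) + 1/γₖ)`,
the series converging absolutely. -/
theorem logDeriv_hadamard_product {I : Type*} [Countable I] (ξ : ℂ → ℂ) (A B : ℂ)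
    (m₀ : ℕ) (γ : I → ℂ) (hγ : ∀ k, γ k ≠ 0)
    (hsum : Summable fun k => 1 / ‖γ k‖ ^ 2)
    (hmul : ∀ z : ℂ, Multipliable fun k => (1 - z / γ k) * Complex.exp (z / γ k))
    (hprod : ∀ z : ℂ, ξ (1 / 2 - Complex.I * z)
      = Complex.exp (A + B * z) * z ^ m₀ * ∏' k, (1 - z / γ k) * Complex.exp (z / γ k))
    (z₀ : ℂ) (hz₀ : z₀ ≠ 0) (hz₀' : ∀ k, z₀ ≠ γ k)
    (hd : DifferentiableAt ℂ ξ (1 / 2 - Complex.I * z₀)) :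
    ξ (1 / 2 - Complex.I * z₀) ≠ 0 ∧
    (Summable fun k => ‖1 / (z₀ - γ k) + 1 / γ k‖) ∧
    deriv ξ (1 / 2 - Complex.I * z₀) / ξ (1 / 2 - Complex.I * z₀)
      = Complex.I * B + Complex.I * (m₀ : ℂ) / z₀
          + Complex.I * ∑' k, (1 / (z₀ - γ k) + 1 / γ k) := by
  obtain ⟨hPne, hsc, hPD⟩ := hadamard_core γ hγ hsum hmul z₀ hz₀'
  have hE : Complex.exp (A + B*z₀) ≠ 0 := Complex.exp_ne_zero _
  have hzm : z₀^m₀ ≠ 0 := pow_ne_zero _ hz₀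
  have h1 : HasDerivAt (fun z : ℂ => Complex.exp (A + B*z)) (Complex.exp (A + B*z₀) * B) z₀ := by
    simpa using (((hasDerivAt_id z₀).const_mul B).const_add A).cexp
  have h2 : HasDerivAt (fun z : ℂ => z^m₀) ((m₀:ℂ) * z₀^(m₀-1)) z₀ := hasDerivAt_pow m₀ z₀
  have hFD := (h1.mul h2).mul hPD
  have hinner : HasDerivAt (fun w : ℂ => Complex.I * (w - 1/2)) Complex.I
      (1/2 - Complex.I*z₀) := by
    have := ((hasDerivAt_id ((1:ℂ)/2 - Complex.I*z₀)).sub_const (1/2)).const_mul Complex.I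
    simp only [mul_one] at this; exact this
  have hpt : Complex.I * ((1/2 - Complex.I*z₀) - 1/2) = z₀ := by
    linear_combination (-z₀) * Complex.I_sq
  have hξeq : ξ = (fun z : ℂ => Complex.exp (A + B*z) * z^m₀
      * ∏' k, (1 - z/γ k) * Complex.exp (z/γ k)) ∘ (fun w => Complex.I * (w - 1/2)) := by
    funext w
    have hw : w = 1/2 - Complex.I * (Complex.I * (w - 1/2)) := by
      linear_combination (w - 1/2) * Complex.I_sq
    rw [Function.comp_apply, ← hprod (Complex.I * (w - 1/2)), ← hw]
  have hcomp := HasDerivAt.comp (h := fun w : ℂ => Complex.I * (w - 1/2)) (1/2 - Complex.I*z₀)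
      (show HasDerivAt (fun z : ℂ => Complex.exp (A + B*z) * z^m₀
          * ∏' k, (1 - z/γ k) * Complex.exp (z/γ k))
        ((Complex.exp (A + B*z₀) * B * z₀^m₀ + Complex.exp (A + B*z₀) * ((m₀:ℂ) * z₀^(m₀-1)))
            * (∏' k, (1 - z₀/γ k) * Complex.exp (z₀/γ k))
          + (Complex.exp (A + B*z₀) * z₀^m₀)
            * ((∏' k, (1 - z₀/γ k) * Complex.exp (z₀/γ k)) * ∑' k, (1/(z₀ - γ k) + 1/γ k)))
        (Complex.I * ((1/2 - Complex.I*z₀) - 1/2)) by rw [hpt]; exact hFD) hinner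
  rw [← hξeq] at hcomp
  refine ⟨?_, hsc, ?_⟩
  · rw [hprod z₀]; exact mul_ne_zero (mul_ne_zero hE hzm) hPne
  · rw [hcomp.deriv, hprod z₀]
    have hm : ((m₀:ℂ) * z₀^(m₀-1)) * z₀ = (m₀:ℂ) * z₀^m₀ := by
      cases m₀ with
      | zero => simp
      | succ n => rw [Nat.succ_sub_one, pow_succ]; ring
    set E := Complex.exp (A + B*z₀)
    set P := ∏' k, (1 - z₀/γ k) * Complex.exp (z₀/γ k)
    set S := ∑' k, (1/(z₀ - γ k) + 1/γ k)
    set X := (m₀:ℂ) * z₀^(m₀-1)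
    field_simp
    linear_combination hm
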